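/- Under the Setup with a complement Ỹ of Y' in Y: let (W, ρ) be a finite-dimensional complex irreducible representation of V such that there exists a nonzero vector w ∈ W with ρ(z)·w = λ(z)·w for all z ∈ Z. Then there exists a nonzero vector w' ∈ W with ρ(u)·w' = λ̃(u)·w' for all u ∈ ZỸ. (In character-theoretic terms: every irreducible character of V lying over λ also lies over λ̃.) -/

import Mathlib

open scoped Pointwise

/-- Under the Setup with a complement `Ỹ` of `Y'` in `Y`: if `(W, ρ)` is
a finite-dimensional complex irreducible representation of `V` possessing a nonzero vector
`w` with `ρ(z)·w = λ(z)·w` for all `z ∈ Z`, then it possesses a nonzero vector `w'` with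
`ρ(u)·w' = λ̃(u)·w'` for all `u ∈ ZỸ`.  (Every irreducible character of `V` lying over
`λ` also lies over `λ̃`.) -/
theorem lies_over_lam_implies_lies_over_lamtilde
    {V : Type*} [Group V] [Fintype V]
    (H Y Z : Subgroup V) (X : Set V)
    (hXrep : ∀ v : V, ∃! p : ↥H × ↥X, (p.1 : V) * (p.2 : V) = v)
    (hZcent : Z ≤ Subgroup.center V)
    (hYH : Y ≤ H)
    (hYcent : ∀ y ∈ Y, ∀ h ∈ H, y * h = h * y)
    (hZY : Z ⊓ Y = ⊥)
    (lam : Z →* ℂˣ)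
    (hXYZ : ∀ x ∈ X, ∀ y ∈ Y, x⁻¹ * y⁻¹ * x * y ∈ Z)
    -- `Ỹ` is a complement of `Y' = {y ∈ Y : λ([x,y]) = 1 ∀ x ∈ X}` in `Y`
    (Yt : Subgroup V) (hYtY : Yt ≤ Y)
    (hcompl₁ : ∀ y : V, y ∈ Yt →
      (y ∈ Y ∧ ∀ x ∈ X, ∀ (hc : x⁻¹ * y⁻¹ * x * y ∈ Z),
        lam ⟨x⁻¹ * y⁻¹ * x * y, hc⟩ = 1) → y = 1)
    (hcompl₂ : ∀ y ∈ Y, ∃ y' : V,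
      (y' ∈ Y ∧ ∀ x ∈ X, ∀ (hc : x⁻¹ * y'⁻¹ * x * y' ∈ Z),
        lam ⟨x⁻¹ * y'⁻¹ * x * y', hc⟩ = 1) ∧ ∃ yt ∈ Yt, y = y' * yt)
    -- `W₂` is the subgroup `ZỸ` of `V`, and `λ̃ : ZỸ → ℂˣ` satisfies `λ̃(z·ỹ) = λ(z)`
    (W₂ : Subgroup V)
    (hW₂ : (W₂ : Set V) = (Z : Set V) * (Yt : Set V))
    (lamt : W₂ →* ℂˣ)
    (hlamt : ∀ (z yt : V) (hz : z ∈ Z) (hyt : yt ∈ Yt) (hm : z * yt ∈ W₂),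
      lamt ⟨z * yt, hm⟩ = lam ⟨z, hz⟩)
    -- `(M, ρ)` is a finite-dimensional complex irreducible representation of `V`
    {M : Type*} [AddCommGroup M] [Module ℂ M] [FiniteDimensional ℂ M]
    (ρ : Representation ℂ V M)
    (hMne : ∃ m : M, m ≠ 0)
    (hirr : ∀ U : Submodule ℂ M, (∀ g : V, ∀ m ∈ U, ρ g m ∈ U) → U = ⊥ ∨ U = ⊤)
    -- there is a nonzero `w` with `ρ(z)·w = λ(z)·w` for all `z ∈ Z`
    (hw : ∃ w : M, w ≠ 0 ∧ ∀ (z : V) (hz : z ∈ Z),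
      ρ z w = ((lam ⟨z, hz⟩ : ℂˣ) : ℂ) • w) :
    -- then there is a nonzero `w'` with `ρ(u)·w' = λ̃(u)·w'` for all `u ∈ ZỸ`
    ∃ w' : M, w' ≠ 0 ∧ ∀ (u : V) (hu : u ∈ W₂),
      ρ u w' = ((lamt ⟨u, hu⟩ : ℂˣ) : ℂ) • w' := by

  classical
  -- Step 1: Z acts on all of M by the scalar λ
  have hglobal : ∀ (z : V) (hz : z ∈ Z) (m : M),
      ρ z m = ((lam ⟨z, hz⟩ : ℂˣ) : ℂ) • m := by
    obtain ⟨w, hw0, hwz⟩ := hw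
    set U : Submodule ℂ M :=
      { carrier := {m | ∀ (z : V) (hz : z ∈ Z), ρ z m = ((lam ⟨z, hz⟩ : ℂˣ) : ℂ) • m}
        add_mem' := by
          intro a b ha hb z hz
          rw [map_add, ha z hz, hb z hz, smul_add]
        zero_mem' := by
          intro z hz
          rw [map_zero, smul_zero]
        smul_mem' := by
          intro a m hm z hz
          rw [map_smul, hm z hz, smul_comm] } with hU
    have hinv : ∀ g : V, ∀ m ∈ U, ρ g m ∈ U := by
      intro g m hm z hz
      have hcomm : z * g = g * z := (Subgroup.mem_center_iff.mp (hZcent hz) g).symm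
      have : ρ z (ρ g m) = ρ g (ρ z m) := by
        rw [← Module.End.mul_apply, ← map_mul, hcomm, map_mul, Module.End.mul_apply]
      rw [this, hm z hz, map_smul]
    rcases hirr U hinv with hbot | htop
    · exact absurd ((Submodule.eq_bot_iff U).mp hbot w hwz) hw0
    · intro z hz m
      exact (htop ▸ Submodule.mem_top : m ∈ U) z hz
  have : Nontrivial M := by obtain ⟨m, hm⟩ := hMne; exact nontrivial_of_ne m 0 hm
  -- Step 2: nontrivial elements of Yt have trace zero
  have htr0 : ∀ y : ↥Yt, y ≠ 1 → LinearMap.trace ℂ M (ρ (y : V)) = 0 := by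
    intro y hy1
    have hyY : (y : V) ∈ Y := hYtY y.2
    have hnot : ¬ (∀ x ∈ X, ∀ (hc : x⁻¹ * (y : V)⁻¹ * x * (y : V) ∈ Z),
        lam ⟨x⁻¹ * (y : V)⁻¹ * x * (y : V), hc⟩ = 1) := by
      intro hall
      exact hy1 (Subtype.ext (hcompl₁ (y : V) y.2 ⟨hyY, hall⟩))
    push_neg at hnot
    obtain ⟨x, hxX, hc, hne⟩ := hnot
    set c : V := x⁻¹ * (y : V)⁻¹ * x * (y : V) with hcdef
    set a : ℂˣ := lam ⟨c, hc⟩ with hadef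
    have hcinv : ρ c⁻¹ = ((a⁻¹ : ℂˣ) : ℂ) • (1 : M →ₗ[ℂ] M) := by
      ext m
      have h1 : ρ c⁻¹ m = ((lam ⟨c⁻¹, inv_mem hc⟩ : ℂˣ) : ℂ) • m := hglobal c⁻¹ (inv_mem hc) m
      have h2 : (⟨c⁻¹, inv_mem hc⟩ : Z) = (⟨c, hc⟩ : Z)⁻¹ := rfl
      rw [h1, h2, map_inv]
      simp [hadef]
    have hyconj : (y : V) = x * ((y : V) * c⁻¹) * x⁻¹ := by
      rw [hcdef]; group
    have hsplit : ρ ((y : V)) = ρ x * (ρ ((y : V)) * ρ c⁻¹) * ρ x⁻¹ := by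
      conv_lhs => rw [hyconj]
      rw [map_mul, map_mul, map_mul]
    have key : LinearMap.trace ℂ M (ρ (y : V)) =
        ((a⁻¹ : ℂˣ) : ℂ) * LinearMap.trace ℂ M (ρ (y : V)) := by
      conv_lhs => rw [hsplit]
      rw [LinearMap.trace_mul_comm, ← mul_assoc, ← map_mul ρ, inv_mul_cancel,
        map_one, one_mul, hcinv, mul_smul_comm, mul_one, LinearMap.map_smul,
        smul_eq_mul]
    have hane : ((a⁻¹ : ℂˣ) : ℂ) ≠ 1 := by
      intro h
      apply hne
      have : (a⁻¹ : ℂˣ) = 1 := Units.ext h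
      rw [inv_eq_one] at this
      exact this
    have h2 : (1 - ((a⁻¹ : ℂˣ) : ℂ)) * LinearMap.trace ℂ M (ρ (y : V)) = 0 := by
      linear_combination key
    rcases mul_eq_zero.mp h2 with h | h
    · exact absurd (by linear_combination -h : ((a⁻¹ : ℂˣ) : ℂ) = 1) hane
    · exact h
  -- Step 3: the averaging operator over Yt has nonzero trace
  set T : M →ₗ[ℂ] M := ∑ y : ↥Yt, (ρ (y : V) : M →ₗ[ℂ] M) with hT
  have htrT : LinearMap.trace ℂ M T = (Module.finrank ℂ M : ℂ) := by
    rw [hT, map_sum]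
    rw [Fintype.sum_eq_single (1 : ↥Yt) (fun b hb => htr0 b hb)]
    simp only [OneMemClass.coe_one, map_one, LinearMap.trace_one]
  have hTne : T ≠ 0 := by
    intro h
    rw [h, map_zero] at htrT
    have : (Module.finrank ℂ M : ℂ) ≠ 0 := by
      exact_mod_cast Nat.cast_ne_zero.mpr (Module.finrank_pos).ne'
    exact this htrT.symm
  have hm : ∃ m : M, T m ≠ 0 := by
    by_contra hcon
    push_neg at hcon
    exact hTne (LinearMap.ext fun m => hcon m)
  obtain ⟨m, hm0⟩ := hm
  -- w' := T m is fixed by Yt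
  have hfix : ∀ yt ∈ Yt, ρ yt (T m) = T m := by
    intro yt hyt
    have : ρ yt (T m) = ∑ y : ↥Yt, ρ (((⟨yt, hyt⟩ * y : ↥Yt) : V)) m := by
      rw [hT, LinearMap.sum_apply, map_sum]
      refine Finset.sum_congr rfl fun y _ => ?_
      rw [Subgroup.coe_mul, map_mul, Module.End.mul_apply]
    rw [this, hT, LinearMap.sum_apply]
    exact Fintype.sum_equiv (Equiv.mulLeft (⟨yt, hyt⟩ : ↥Yt))
      (fun y => ρ (((⟨yt, hyt⟩ * y : ↥Yt) : V)) m) (fun y => ρ ((y : ↥Yt) : V) m)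
      (fun y => rfl)
  refine ⟨T m, hm0, ?_⟩
  intro u hu
  have humem : u ∈ (Z : Set V) * (Yt : Set V) := by rw [← hW₂]; exact hu
  obtain ⟨z, hz, yt, hyt, hzy⟩ := Set.mem_mul.mp humem
  have hmem : z * yt ∈ W₂ := by rw [hzy]; exact hu
  have hlam_eq : lamt ⟨u, hu⟩ = lam ⟨z, hz⟩ := by
    have : (⟨u, hu⟩ : W₂) = ⟨z * yt, hmem⟩ := Subtype.ext hzy.symm
    rw [this, hlamt z yt hz hyt hmem]
  rw [hlam_eq]
  have : ρ u (T m) = ρ z (ρ yt (T m)) := by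
    rw [← hzy, map_mul, Module.End.mul_apply]
  rw [this, hfix yt hyt, hglobal z hz]
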